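/- Let B and Y be topological spaces, f : Y → B × B a continuous map, and U ⊆ Y an open set admitting a continuous map σ : U → P(B) with (σ(y)(0), σ(y)(1)) = f(y) for all y ∈ U. Let Ŷ = Y ⊕ B be the topological sum, let f̂ : Ŷ → B × B be given by f̂ = f on Y and f̂(b) = (b,b) on B, and let Û = U ⊕ B, an open subset of Ŷ. Then there exists a continuous homotopy Φ : Û × [0,1] → B × B such that Φ(ŷ, 0) = f̂(ŷ), Φ(ŷ, 1) ∈ Δ(B), the second coordinate of Φ(ŷ, t) equals the second coordinate of f̂(ŷ) for all ŷ ∈ Û and t ∈ [0,1], and Φ(b, t) = (b,b) for every b ∈ B ⊆ Ŷ and t ∈ [0,1]. -/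

import Mathlib

open unitInterval

/-- Given a continuous `f : Y → B × B` and an open `U ⊆ Y` with a continuous local
section `sec : U → P(B)` of the pullback of the path fibration (`(sec(y)(0), sec(y)(1)) = f(y)`),
the extension `f̂` of `f` to `Ŷ = Y ⊕ B` (with `f̂(b) = (b,b)`) restricted to
`Û = U ⊕ B` is fibrewise compressible into the diagonal by a fibrewise pointed
homotopy. -/
theorem section_gives_pointed_compression (B Y : Type) [TopologicalSpace B]
    [TopologicalSpace Y] (f : C(Y, B × B)) (U : Set Y) (hU : IsOpen U)
    (sec : C(↥U, C(I, B))) (hsec : ∀ y : ↥U, (sec y 0, sec y 1) = f (y : Y)) :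
    ∃ Φ : C(↥(Sum.inl '' U ∪ Set.range Sum.inr : Set (Y ⊕ B)) × I, B × B),
      (∀ x : ↥(Sum.inl '' U ∪ Set.range Sum.inr : Set (Y ⊕ B)),
        Φ (x, 0) = Sum.elim ⇑f (fun b => (b, b)) (x : Y ⊕ B)) ∧
      (∀ x : ↥(Sum.inl '' U ∪ Set.range Sum.inr : Set (Y ⊕ B)),
        (Φ (x, 1)).1 = (Φ (x, 1)).2) ∧
      (∀ (x : ↥(Sum.inl '' U ∪ Set.range Sum.inr : Set (Y ⊕ B))) (t : I),
        (Φ (x, t)).2 = (Sum.elim ⇑f (fun b => (b, b)) (x : Y ⊕ B)).2) ∧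
      (∀ (b : B) (hb : (Sum.inr b : Y ⊕ B) ∈ (Sum.inl '' U ∪ Set.range Sum.inr : Set (Y ⊕ B)))
        (t : I), Φ (⟨Sum.inr b, hb⟩, t) = (b, b)) := by
  set S : Set (Y ⊕ B) := Sum.inl '' U ∪ Set.range Sum.inr with hS
  have hmem₁ : ∀ u : ↥U, (Sum.inl ↑u : Y ⊕ B) ∈ S := fun u => Or.inl ⟨u.1, u.2, rfl⟩
  have hmem₂ : ∀ b : B, (Sum.inr b : Y ⊕ B) ∈ S := fun b => Or.inr ⟨b, rfl⟩
  let φ : ↥U ⊕ B → ↥S :=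
    Sum.elim (fun u => ⟨Sum.inl ↑u, hmem₁ u⟩) (fun b => ⟨Sum.inr b, hmem₂ b⟩)
  have hφc : Continuous φ :=
    Continuous.sumElim (Continuous.subtype_mk (continuous_inl.comp continuous_subtype_val) _)
      (Continuous.subtype_mk continuous_inr _)
  have hφinj : Function.Injective φ := by
    rintro (u | b) (v | c) h
    · exact congrArg Sum.inl (Subtype.ext (by simpa [φ] using congrArg Subtype.val h))
    · simpa [φ] using congrArg Subtype.val h
    · simpa [φ] using congrArg Subtype.val h
    · exact congrArg Sum.inr (by simpa [φ] using congrArg Subtype.val h)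
  have hφsurj : Function.Surjective φ := by
    rintro ⟨x, hx | hx⟩
    · obtain ⟨y, hy, rfl⟩ := hx
      exact ⟨Sum.inl ⟨y, hy⟩, rfl⟩
    · obtain ⟨b, rfl⟩ := hx
      exact ⟨Sum.inr b, rfl⟩
  have hφopen : IsOpenMap φ := by
    apply isOpenMap_sumElim.2
    constructor
    · intro V hV
      obtain ⟨W, hW, rfl⟩ := hV
      have hopen : IsOpen (Sum.inl '' (W ∩ U) : Set (Y ⊕ B)) :=
        isOpenMap_inl _ (hW.inter hU)
      have : (fun u : ↥U => (⟨Sum.inl ↑u, hmem₁ u⟩ : ↥S)) '' (Subtype.val ⁻¹' W)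
          = Subtype.val ⁻¹' (Sum.inl '' (W ∩ U)) := by
        ext ⟨x, hx⟩
        constructor
        · rintro ⟨u, hu, h⟩
          have hx' : x = Sum.inl ↑u := by simpa using congrArg Subtype.val h.symm
          simp only [Set.mem_preimage, hx']
          exact ⟨↑u, ⟨hu, u.2⟩, rfl⟩
        · rintro ⟨y, ⟨hyW, hyU⟩, h⟩
          exact ⟨⟨y, hyU⟩, hyW, Subtype.ext h⟩
      rw [this]
      exact hopen.preimage continuous_subtype_val
    · intro V hV
      have hopen : IsOpen (Sum.inr '' V : Set (Y ⊕ B)) := isOpenMap_inr _ hV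
      have : (fun b : B => (⟨Sum.inr b, hmem₂ b⟩ : ↥S)) '' V
          = Subtype.val ⁻¹' (Sum.inr '' V) := by
        ext ⟨x, hx⟩
        constructor
        · rintro ⟨b, hb, h⟩
          have hx' : x = Sum.inr b := by simpa using congrArg Subtype.val h.symm
          simp only [Set.mem_preimage, hx']
          exact ⟨b, hb, rfl⟩
        · rintro ⟨b, hb, h⟩
          exact ⟨b, hb, Subtype.ext h⟩
      rw [this]
      exact hopen.preimage continuous_subtype_val
  let e : (↥U ⊕ B) ≃ₜ ↥S :=
    (Equiv.ofBijective φ ⟨hφinj, hφsurj⟩).toHomeomorphOfContinuousOpen hφc hφopen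
  let g₁ : C(↥U × I, B × B) :=
    ⟨fun p => (sec p.1 p.2, (f ↑p.1).2), by fun_prop⟩
  let g₂ : C(B × I, B × B) := ⟨fun p => (p.1, p.1), by fun_prop⟩
  let d := Homeomorph.sumProdDistrib (X := ↥U) (Y := B) (Z := I)
  let Ψ : C((↥U ⊕ B) × I, B × B) :=
    ⟨fun q => Sum.elim ⇑g₁ ⇑g₂ (d q),
      (Continuous.sumElim g₁.continuous g₂.continuous).comp d.continuous⟩
  refine ⟨Ψ.comp ((e.symm : C(↥S, ↥U ⊕ B)).prodMap (ContinuousMap.id I)), ?_, ?_, ?_, ?_⟩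
  · intro x
    obtain ⟨z, rfl⟩ := e.surjective x
    rcases z with u | b
    · simp only [ContinuousMap.comp_apply, ContinuousMap.prodMap_apply,
        ContinuousMap.coe_coe, ContinuousMap.id_apply, Prod.map_apply,
        Homeomorph.symm_apply_apply, Ψ, d, g₁]
      have h1 : (e (Sum.inl u) : Y ⊕ B) = Sum.inl ↑u := rfl
      rw [h1]
      simp only [Homeomorph.sumProdDistrib, Homeomorph.trans_apply]
      have h0 : sec u 0 = (f ↑u).1 := congrArg Prod.fst (hsec u)
      simp [Equiv.sumProdDistrib, h0]
    · simp only [ContinuousMap.comp_apply, ContinuousMap.prodMap_apply,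
        ContinuousMap.coe_coe, ContinuousMap.id_apply, Prod.map_apply,
        Homeomorph.symm_apply_apply, Ψ, d, g₂]
      have h1 : (e (Sum.inr b) : Y ⊕ B) = Sum.inr b := rfl
      rw [h1]
      simp [Homeomorph.sumProdDistrib, Equiv.sumProdDistrib]
  · intro x
    obtain ⟨z, rfl⟩ := e.surjective x
    rcases z with u | b
    · simp only [ContinuousMap.comp_apply, ContinuousMap.prodMap_apply,
        ContinuousMap.coe_coe, ContinuousMap.id_apply, Prod.map_apply,
        Homeomorph.symm_apply_apply, Ψ, d, g₁]
      have h1 : sec u 1 = (f ↑u).2 := congrArg Prod.snd (hsec u)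
      simp [Homeomorph.sumProdDistrib, Equiv.sumProdDistrib, h1]
    · simp [Ψ, d, g₂, Homeomorph.sumProdDistrib, Equiv.sumProdDistrib]
  · intro x t
    obtain ⟨z, rfl⟩ := e.surjective x
    rcases z with u | b
    · have h1 : (e (Sum.inl u) : Y ⊕ B) = Sum.inl ↑u := rfl
      simp only [ContinuousMap.comp_apply, ContinuousMap.prodMap_apply,
        ContinuousMap.coe_coe, ContinuousMap.id_apply, Prod.map_apply,
        Homeomorph.symm_apply_apply, Ψ, d, g₁, h1]
      simp [Homeomorph.sumProdDistrib, Equiv.sumProdDistrib]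
    · have h1 : (e (Sum.inr b) : Y ⊕ B) = Sum.inr b := rfl
      simp only [ContinuousMap.comp_apply, ContinuousMap.prodMap_apply,
        ContinuousMap.coe_coe, ContinuousMap.id_apply, Prod.map_apply,
        Homeomorph.symm_apply_apply, Ψ, d, g₂, h1]
      simp [Homeomorph.sumProdDistrib, Equiv.sumProdDistrib]
  · intro b hb t
    have he : e.symm ⟨Sum.inr b, hb⟩ = Sum.inr b := by
      apply e.injective
      simp only [Homeomorph.apply_symm_apply]
      rfl
    simp only [ContinuousMap.comp_apply, ContinuousMap.prodMap_apply,
      ContinuousMap.coe_coe, ContinuousMap.id_apply, Prod.map_apply, Ψ, d, g₂]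
    rw [he]
    simp [Homeomorph.sumProdDistrib, Equiv.sumProdDistrib]
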